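/- Let k ≥ 1 be a natural number and s ≥ 0 an integer. If s < k−1, then P_s·H_k = {p ∈ P_{s+k} : Δ^{s+1} p = 0}, i.e. P_s·H_k equals the kernel of Δ^{s+1} on homogeneous polynomials of degree s+k. If s ≥ k−1, then P_s·H_k = P_{s+k}. -/

import Mathlib

open MvPolynomial

/-- The Laplacian on polynomials in two variables. -/
noncomputable def pLap (p : MvPolynomial (Fin 2) ℝ) : MvPolynomial (Fin 2) ℝ :=
  pderiv 0 (pderiv 0 p) + pderiv 1 (pderiv 1 p)

namespace PsHkAux

abbrev MvP := MvPolynomial (Fin 2) ℝ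

/-- The pair (Re((x+iy)^n), Im((x+iy)^n)) as polynomials. -/
noncomputable def FG : ℕ → MvP × MvP
  | 0 => (1, 0)
  | n+1 => (X 0 * (FG n).1 - X 1 * (FG n).2, X 0 * (FG n).2 + X 1 * (FG n).1)

noncomputable def FF (n : ℕ) : MvP := (FG n).1
noncomputable def GG (n : ℕ) : MvP := (FG n).2

@[simp] lemma FF_zero : FF 0 = 1 := rfl
@[simp] lemma GG_zero : GG 0 = 0 := rfl
lemma FF_succ (n : ℕ) : FF (n+1) = X 0 * FF n - X 1 * GG n := rfl
lemma GG_succ (n : ℕ) : GG (n+1) = X 0 * GG n + X 1 * FF n := rfl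

lemma eval_FG (n : ℕ) (x y : ℝ) :
    eval ![x, y] (FF n) = (((x : ℂ) + y * Complex.I) ^ n).re ∧
    eval ![x, y] (GG n) = (((x : ℂ) + y * Complex.I) ^ n).im := by
  induction n with
  | zero => simp [FF, GG, FG]
  | succ n ih =>
    rw [FF_succ, GG_succ, pow_succ]
    constructor <;>
      simp [Complex.mul_re, Complex.mul_im, ih.1, ih.2] <;> ring

lemma FF_isHomogeneous (n : ℕ) :
    (FF n).IsHomogeneous n ∧ (GG n).IsHomogeneous n := by
  induction n with
  | zero => exact ⟨isHomogeneous_one _ _, isHomogeneous_zero _ _ _⟩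
  | succ n ih =>
    rw [FF_succ, GG_succ]
    rw [show n + 1 = 1 + n by omega]
    constructor
    · exact (((isHomogeneous_X _ _).mul ih.1).sub ((isHomogeneous_X _ _).mul ih.2))
    · exact (((isHomogeneous_X _ _).mul ih.2).add ((isHomogeneous_X _ _).mul ih.1))

lemma pderiv_FG (n : ℕ) :
    pderiv 0 (FF (n+1)) = ((n+1 : ℕ) : MvP) * FF n ∧
    pderiv 1 (FF (n+1)) = - (((n+1 : ℕ) : MvP) * GG n) ∧
    pderiv 0 (GG (n+1)) = ((n+1 : ℕ) : MvP) * GG n ∧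
    pderiv 1 (GG (n+1)) = ((n+1 : ℕ) : MvP) * FF n := by
  induction n with
  | zero =>
    refine ⟨?_, ?_, ?_, ?_⟩ <;>
      simp [FF_succ, GG_succ, pderiv_mul, pderiv_X_self,
        pderiv_X_of_ne (show (1 : Fin 2) ≠ 0 by decide),
        pderiv_X_of_ne (show (0 : Fin 2) ≠ 1 by decide)]
  | succ n ih =>
    obtain ⟨h1, h2, h3, h4⟩ := ih
    refine ⟨?_, ?_, ?_, ?_⟩ <;>
      · first
          | rw [show FF (n+1+1) = X 0 * FF (n+1) - X 1 * GG (n+1) from rfl]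
          | rw [show GG (n+1+1) = X 0 * GG (n+1) + X 1 * FF (n+1) from rfl]
        simp only [map_sub, map_add, pderiv_mul, pderiv_X_self,
          pderiv_X_of_ne (show (1 : Fin 2) ≠ 0 by decide),
          pderiv_X_of_ne (show (0 : Fin 2) ≠ 1 by decide), h1, h2, h3, h4]
        rw [FF_succ, GG_succ]
        push_cast
        ring

/-! ### Basic algebra of `pLap` -/

lemma pLap_add (p q : MvP) : pLap (p + q) = pLap p + pLap q := by
  simp only [pLap, map_add]; ring

lemma pLap_zero : pLap 0 = 0 := by simp [pLap]

lemma pLap_C_mul (c : ℝ) (p : MvP) : pLap (C c * p) = C c * pLap p := by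
  simp only [pLap, pderiv_C_mul]; ring

lemma pLap_smul (c : ℝ) (p : MvP) : pLap (c • p) = c • pLap p := by
  rw [smul_eq_C_mul, smul_eq_C_mul, pLap_C_mul]

lemma pLap_sub (p q : MvP) : pLap (p - q) = pLap p - pLap q := by
  simp only [pLap, map_sub]; ring

lemma pLap_mul (p q : MvP) :
    pLap (p * q) = pLap p * q + p * pLap q
      + 2 * (pderiv 0 p * pderiv 0 q + pderiv 1 p * pderiv 1 q) := by
  simp only [pLap, map_add, pderiv_mul]; ring

lemma pLap_iter_zero (t : ℕ) : pLap^[t] 0 = 0 := by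
  induction t with
  | zero => rfl
  | succ t ih => rw [Function.iterate_succ_apply, pLap_zero, ih]

lemma pLap_iter_add (t : ℕ) (p q : MvP) :
    pLap^[t] (p + q) = pLap^[t] p + pLap^[t] q := by
  induction t generalizing p q with
  | zero => rfl
  | succ t ih =>
    rw [Function.iterate_succ_apply, Function.iterate_succ_apply,
      Function.iterate_succ_apply, pLap_add, ih]

lemma pLap_iter_smul (t : ℕ) (c : ℝ) (p : MvP) :
    pLap^[t] (c • p) = c • pLap^[t] p := by
  induction t generalizing p with
  | zero => rfl
  | succ t ih =>
    rw [Function.iterate_succ_apply, Function.iterate_succ_apply, pLap_smul, ih]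

lemma pLap_iter_C_mul (t : ℕ) (c : ℝ) (p : MvP) :
    pLap^[t] (C c * p) = C c * pLap^[t] p := by
  rw [← smul_eq_C_mul, ← smul_eq_C_mul, pLap_iter_smul]

/-! ### Commutation of partial derivatives -/

lemma pderiv_comm' (i j : Fin 2) (p : MvP) :
    pderiv i (pderiv j p) = pderiv j (pderiv i p) := by
  induction p using MvPolynomial.induction_on' with
  | add p q hp hq => simp only [map_add, hp, hq]
  | monomial d c =>
    by_cases h : i = j
    · subst h; rfl
    · simp only [pderiv_monomial]
      have h1 : d - Finsupp.single j 1 - Finsupp.single i 1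
          = d - Finsupp.single i 1 - Finsupp.single j 1 := by
        ext a; simp only [Finsupp.tsub_apply]; omega
      have h2 : ((d - Finsupp.single j 1 : Fin 2 →₀ ℕ)) i = d i := by
        rw [Finsupp.tsub_apply, Finsupp.single_apply, if_neg (Ne.symm h)]
        simp
      have h3 : ((d - Finsupp.single i 1 : Fin 2 →₀ ℕ)) j = d j := by
        rw [Finsupp.tsub_apply, Finsupp.single_apply, if_neg h]
        simp
      rw [h1, h2, h3, mul_right_comm]

lemma pLap_pderiv (i : Fin 2) (p : MvP) : pLap (pderiv i p) = pderiv i (pLap p) := by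
  simp only [pLap, map_add]
  rw [pderiv_comm' 0 i, pderiv_comm' 0 i, pderiv_comm' 1 i, pderiv_comm' 1 i]

/-! ### Degrees -/

lemma deg2 (d : Fin 2 →₀ ℕ) : d.degree = d 0 + d 1 := by
  have : ∑ i ∈ d.support, d i = ∑ i : Fin 2, d i :=
    Finset.sum_subset (Finset.subset_univ _)
      (fun i _ hi => Finsupp.notMem_support_iff.mp hi)
  rw [Finsupp.degree_apply, this, Fin.sum_univ_two]

lemma degree_eq_of_homog {p : MvP} {m : ℕ} (hp : p.IsHomogeneous m)
    {d : Fin 2 →₀ ℕ} (hd : d ∈ p.support) : d 0 + d 1 = m := by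
  rw [← deg2]
  by_contra h
  exact (mem_support_iff.mp hd) (hp.coeff_eq_zero h)

lemma eq_C_of_isHomogeneous_zero {p : MvP} (hp : p.IsHomogeneous 0) :
    p = C (coeff 0 p) := by
  ext d
  by_cases hd : d = 0
  · subst hd; simp
  · rw [coeff_C, if_neg (Ne.symm hd)]
    apply hp.coeff_eq_zero
    exact fun h => hd ((Finsupp.degree_eq_zero_iff d).mp h)

lemma pderiv_isHomogeneous {p : MvP} {m : ℕ} (i : Fin 2) (hp : p.IsHomogeneous m) :
    (pderiv i p).IsHomogeneous (m - 1) := by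
  rw [p.as_sum, map_sum]
  apply IsHomogeneous.sum
  intro d hd
  rw [pderiv_monomial]
  by_cases hdi : d i = 0
  · rw [hdi]; norm_num
    exact isHomogeneous_zero _ _ _
  · apply isHomogeneous_monomial
    have hdeg : d 0 + d 1 = m := degree_eq_of_homog hp hd
    rw [deg2, Finsupp.tsub_apply, Finsupp.tsub_apply]
    have hi : i = 0 ∨ i = 1 := by omega
    rcases hi with rfl | rfl <;> simp [Finsupp.single_apply] <;> omega

lemma pLap_isHomogeneous {p : MvP} {m : ℕ} (hp : p.IsHomogeneous m) :
    (pLap p).IsHomogeneous (m - 2) := by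
  have h0 := pderiv_isHomogeneous 0 (pderiv_isHomogeneous 0 hp)
  have h1 := pderiv_isHomogeneous 1 (pderiv_isHomogeneous 1 hp)
  rw [Nat.sub_sub] at h0 h1
  exact h0.add h1

/-! ### Euler identity -/

lemma euler_X_pow_0 (a : ℕ) : X 0 * pderiv 0 ((X 0 : MvP) ^ a) = (a : MvP) * X 0 ^ a := by
  cases a with
  | zero => simp
  | succ a =>
    rw [pderiv_pow, pderiv_X_self, Nat.succ_sub_one]
    push_cast; ring

lemma euler_X_pow_1 (a : ℕ) : X 1 * pderiv 1 ((X 1 : MvP) ^ a) = (a : MvP) * X 1 ^ a := by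
  cases a with
  | zero => simp
  | succ a =>
    rw [pderiv_pow, pderiv_X_self, Nat.succ_sub_one]
    push_cast; ring

lemma euler_monomial (d : Fin 2 →₀ ℕ) (c : ℝ) :
    X 0 * pderiv 0 (monomial d c) + X 1 * pderiv 1 (monomial d c)
      = ((d 0 + d 1 : ℕ) : MvP) * monomial d c := by
  rw [monomial_eq, Finsupp.prod_fintype _ _ (fun i => pow_zero _), Fin.prod_univ_two]
  have z0 : pderiv 0 ((X 1 : MvP) ^ d 1) = 0 := by
    rw [pderiv_pow, pderiv_X_of_ne (show (1:Fin 2) ≠ 0 by decide), mul_zero]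
  have z1 : pderiv 1 ((X 0 : MvP) ^ d 0) = 0 := by
    rw [pderiv_pow, pderiv_X_of_ne (show (0:Fin 2) ≠ 1 by decide), mul_zero]
  have e0 : pderiv 0 ((X 0 : MvP) ^ d 0 * X 1 ^ d 1)
      = pderiv 0 ((X 0 : MvP) ^ d 0) * X 1 ^ d 1 := by
    rw [pderiv_mul, z0]; ring
  have e1 : pderiv 1 ((X 0 : MvP) ^ d 0 * X 1 ^ d 1)
      = X 0 ^ d 0 * pderiv 1 ((X 1 : MvP) ^ d 1) := by
    rw [pderiv_mul, z1]; ring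
  rw [pderiv_C_mul, pderiv_C_mul, e0, e1]
  have k0 := euler_X_pow_0 (d 0)
  have k1 := euler_X_pow_1 (d 1)
  push_cast
  linear_combination (C c * (X 1:MvP) ^ d 1) * k0 + (C c * (X 0:MvP) ^ d 0) * k1

lemma euler {p : MvP} {m : ℕ} (hp : p.IsHomogeneous m) :
    X 0 * pderiv 0 p + X 1 * pderiv 1 p = (m : MvP) * p := by
  conv_lhs => rw [p.as_sum]
  conv_rhs => rw [p.as_sum]
  rw [map_sum, map_sum, Finset.mul_sum, Finset.mul_sum, Finset.mul_sum,
    ← Finset.sum_add_distrib]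
  refine Finset.sum_congr rfl fun d hd => ?_
  rw [euler_monomial, degree_eq_of_homog hp hd]

/-! ### Homogeneous polynomials with vanishing `x`-derivative -/

lemma zder {m : ℕ} {p : MvP} (hp : p.IsHomogeneous m) (h0 : pderiv 0 p = 0) :
    ∃ c : ℝ, p = c • X 1 ^ m := by
  induction m generalizing p with
  | zero =>
    refine ⟨coeff 0 p, ?_⟩
    rw [pow_zero, smul_eq_C_mul, mul_one]
    exact eq_C_of_isHomogeneous_zero hp
  | succ m ih =>
    have h1 : (pderiv 1 p).IsHomogeneous m := by
      simpa using pderiv_isHomogeneous 1 hp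
    have h2 : pderiv 0 (pderiv 1 p) = 0 := by rw [pderiv_comm' 0 1, h0, map_zero]
    obtain ⟨c, hc⟩ := ih h1 h2
    have hne : ((m : ℝ) + 1) ≠ 0 := by positivity
    refine ⟨c / ((m : ℝ) + 1), ?_⟩
    have he := euler hp
    rw [h0, hc, mul_zero, zero_add] at he
    have hcast : ((m + 1 : ℕ) : MvP) = C ((m : ℝ) + 1) := by
      rw [← map_natCast (C : ℝ →+* MvP) (m + 1)]
      norm_num
    rw [hcast] at he
    have he' : C ((m : ℝ) + 1) * p = c • X 1 ^ (m + 1) := by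
      rw [← he, mul_smul_comm, ← pow_succ']
    have : C ((m : ℝ) + 1) * ((c / ((m : ℝ) + 1)) • X 1 ^ (m + 1))
        = C ((m : ℝ) + 1) * p := by
      rw [he', smul_eq_C_mul, smul_eq_C_mul, ← mul_assoc, ← map_mul]
      congr 2
      field_simp
    have hCne : (C ((m : ℝ) + 1) : MvP) ≠ 0 := by
      rw [Ne, C_eq_zero]
      exact hne
    exact (mul_left_cancel₀ hCne this).symm

/-! ### Harmonicity of `FF`, `GG` -/

@[simp] lemma FF_one : FF 1 = X 0 := by rw [FF_succ]; simp
@[simp] lemma GG_one : GG 1 = X 1 := by rw [GG_succ]; simp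

lemma pderiv_natCast_mul (i : Fin 2) (c : ℕ) (p : MvP) :
    pderiv i ((c : MvP) * p) = (c : MvP) * pderiv i p := by
  rw [← map_natCast (C : ℝ →+* MvP) c, pderiv_C_mul]

lemma pLap_natCast_mul (c : ℕ) (p : MvP) : pLap ((c : MvP) * p) = (c : MvP) * pLap p := by
  rw [← map_natCast (C : ℝ →+* MvP) c, pLap_C_mul]

lemma pLap_iter_natCast_mul (t c : ℕ) (p : MvP) :
    pLap^[t] ((c : MvP) * p) = (c : MvP) * pLap^[t] p := by
  rw [← map_natCast (C : ℝ →+* MvP) c, pLap_iter_C_mul]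

lemma pLap_FF (n : ℕ) : pLap (FF n) = 0 ∧ pLap (GG n) = 0 := by
  match n with
  | 0 => constructor <;> simp [pLap]
  | 1 => constructor <;> simp [pLap, pderiv_X_self,
      pderiv_X_of_ne (show (1:Fin 2) ≠ 0 by decide),
      pderiv_X_of_ne (show (0:Fin 2) ≠ 1 by decide)]
  | (n+2) =>
    obtain ⟨a1, a2, a3, a4⟩ := pderiv_FG (n+1)
    obtain ⟨b1, b2, b3, b4⟩ := pderiv_FG n
    constructor
    · rw [pLap, a1, a2, map_neg, pderiv_natCast_mul, pderiv_natCast_mul, b1, b4]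
      ring
    · rw [pLap, a3, a4, pderiv_natCast_mul, pderiv_natCast_mul, b3, b2]
      ring

/-! ### The polynomial `r² = x² + y²` -/

noncomputable def RR : MvP := X 0 ^ 2 + X 1 ^ 2

lemma RR_isHomogeneous : RR.IsHomogeneous 2 := by
  have h0 : ((X 0 : MvP) ^ 2).IsHomogeneous 2 := by
    simpa using (isHomogeneous_X ℝ (0 : Fin 2)).pow 2
  have h1 : ((X 1 : MvP) ^ 2).IsHomogeneous 2 := by
    simpa using (isHomogeneous_X ℝ (1 : Fin 2)).pow 2
  exact h0.add h1

lemma genF_isHomogeneous (i j : ℕ) : (RR ^ i * FF j).IsHomogeneous (2 * i + j) :=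
  (RR_isHomogeneous.pow i).mul (FF_isHomogeneous j).1

lemma genG_isHomogeneous (i j : ℕ) : (RR ^ i * GG j).IsHomogeneous (2 * i + j) :=
  (RR_isHomogeneous.pow i).mul (FF_isHomogeneous j).2

/-! ### Product identities -/

lemma addFG (m k : ℕ) : FF (m + k) = FF m * FF k - GG m * GG k ∧
    GG (m + k) = GG m * FF k + FF m * GG k := by
  induction k with
  | zero => simp
  | succ k ih =>
    constructor
    · rw [show FF (m + (k+1)) = X 0 * FF (m+k) - X 1 * GG (m+k) from rfl,
        ih.1, ih.2, FF_succ, GG_succ]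
      ring
    · rw [show GG (m + (k+1)) = X 0 * GG (m+k) + X 1 * FF (m+k) from rfl,
        ih.1, ih.2, FF_succ, GG_succ]
      ring

lemma conjFG (c i : ℕ) : FF (c + i) * FF i + GG (c + i) * GG i = RR ^ i * FF c ∧
    GG (c + i) * FF i - FF (c + i) * GG i = RR ^ i * GG c := by
  induction i with
  | zero => simp
  | succ i ih =>
    have e1 := ih.1
    have e2 := ih.2
    constructor
    · rw [show FF (c + (i+1)) = X 0 * FF (c+i) - X 1 * GG (c+i) from rfl,
        show GG (c + (i+1)) = X 0 * GG (c+i) + X 1 * FF (c+i) from rfl,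
        FF_succ, GG_succ, pow_succ, RR]
      simp only [RR] at e1
      linear_combination ((X 0:MvP)^2 + X 1^2) * e1
    · rw [show FF (c + (i+1)) = X 0 * FF (c+i) - X 1 * GG (c+i) from rfl,
        show GG (c + (i+1)) = X 0 * GG (c+i) + X 1 * FF (c+i) from rfl,
        FF_succ, GG_succ, pow_succ, RR]
      simp only [RR] at e2
      linear_combination ((X 0:MvP)^2 + X 1^2) * e2

lemma idA (j : ℕ) : X 0 * FF (j+1) + X 1 * GG (j+1) = RR * FF j := by
  rw [FF_succ, GG_succ]; simp only [RR]; ring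

lemma idB (j : ℕ) : X 0 * GG (j+1) - X 1 * FF (j+1) = RR * GG j := by
  rw [FF_succ, GG_succ]; simp only [RR]; ring

/-! ### The submodules `TM` and `SM` -/

noncomputable def TM (t n : ℕ) : Submodule ℝ MvP :=
  Submodule.span ℝ {q | ∃ i j : ℕ, i ≤ t ∧ 2*i + j = n ∧ (q = RR^i * FF j ∨ q = RR^i * GG j)}

lemma memF_TM {t n i j : ℕ} (hi : i ≤ t) (hn : 2*i + j = n) : RR^i * FF j ∈ TM t n :=
  Submodule.subset_span ⟨i, j, hi, hn, Or.inl rfl⟩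

lemma memG_TM {t n i j : ℕ} (hi : i ≤ t) (hn : 2*i + j = n) : RR^i * GG j ∈ TM t n :=
  Submodule.subset_span ⟨i, j, hi, hn, Or.inr rfl⟩

lemma TM_isHomogeneous {t n : ℕ} {p : MvP} (hp : p ∈ TM t n) : p.IsHomogeneous n := by
  have h : TM t n ≤ homogeneousSubmodule (Fin 2) ℝ n := by
    apply Submodule.span_le.mpr
    rintro q ⟨i, j, hi, hn, (rfl | rfl)⟩ <;> rw [SetLike.mem_coe, mem_homogeneousSubmodule, ← hn]
    · exact genF_isHomogeneous i j
    · exact genG_isHomogeneous i j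
  exact (mem_homogeneousSubmodule _ _).mp (h hp)

noncomputable def SM (s k : ℕ) : Submodule ℝ MvP where
  carrier := {p | ∃ p₁ p₂ : MvP, p₁.IsHomogeneous s ∧ p₂.IsHomogeneous s ∧
    p = p₁ * FF k + p₂ * GG k}
  add_mem' := by
    rintro a b ⟨a1, a2, ha1, ha2, rfl⟩ ⟨b1, b2, hb1, hb2, rfl⟩
    exact ⟨a1 + b1, a2 + b2, ha1.add hb1, ha2.add hb2, by ring⟩
  zero_mem' := ⟨0, 0, isHomogeneous_zero _ _ _, isHomogeneous_zero _ _ _, by simp⟩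
  smul_mem' := by
    rintro c a ⟨a1, a2, ha1, ha2, rfl⟩
    refine ⟨c • a1, c • a2, ?_, ?_, ?_⟩
    · rw [smul_eq_C_mul]; exact ha1.C_mul c
    · rw [smul_eq_C_mul]; exact ha2.C_mul c
    · rw [smul_eq_C_mul, smul_eq_C_mul, smul_eq_C_mul]; ring

lemma mem_SM_iff {s k : ℕ} {p : MvP} : p ∈ SM s k ↔ ∃ p₁ p₂ : MvP,
    p₁.IsHomogeneous s ∧ p₂.IsHomogeneous s ∧ p = p₁ * FF k + p₂ * GG k := Iff.rfl

lemma TM_le_SM {s k n : ℕ} (hn : n = s + k) : TM s n ≤ SM s k := by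
  apply Submodule.span_le.mpr
  rintro q ⟨i, j, hi, hjn, ho⟩
  set m := s - i with hm'
  have hm : m + i = s := by omega
  have hjk : j + i = m + k := by omega
  have e1 := (addFG m k).1
  have e2 := (addFG m k).2
  have hc1 : FF (m+k) * FF i + GG (m+k) * GG i = RR^i * FF j := by
    rw [← hjk]; exact (conjFG j i).1
  have hc2 : GG (m+k) * FF i - FF (m+k) * GG i = RR^i * GG j := by
    rw [← hjk]; exact (conjFG j i).2
  have hA : (FF m * FF i + GG m * GG i).IsHomogeneous s := by
    rw [← hm]
    exact ((FF_isHomogeneous m).1.mul (FF_isHomogeneous i).1).add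
      ((FF_isHomogeneous m).2.mul (FF_isHomogeneous i).2)
  have hB : (GG m * FF i - FF m * GG i).IsHomogeneous s := by
    rw [← hm]
    exact ((FF_isHomogeneous m).2.mul (FF_isHomogeneous i).1).sub
      ((FF_isHomogeneous m).1.mul (FF_isHomogeneous i).2)
  rw [SetLike.mem_coe, mem_SM_iff]
  rcases ho with rfl | rfl
  · exact ⟨FF m * FF i + GG m * GG i, -(GG m * FF i - FF m * GG i), hA, hB.neg,
      by linear_combination -hc1 + FF i * e1 + GG i * e2⟩
  · exact ⟨GG m * FF i - FF m * GG i, FF m * FF i + GG m * GG i, hB, hA,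
      by linear_combination -hc2 + FF i * e2 - GG i * e1⟩

/-! ### The Laplacian on generators -/

lemma pderiv_RR_0 : pderiv 0 RR = 2 * X 0 := by
  have h : pderiv 0 ((X 1 : MvP) ^ 2) = 0 := by
    rw [pderiv_pow, pderiv_X_of_ne (show (1:Fin 2) ≠ 0 by decide), mul_zero]
  rw [RR, map_add, h, pderiv_pow, pderiv_X_self]
  norm_num

lemma pderiv_RR_1 : pderiv 1 RR = 2 * X 1 := by
  have h : pderiv 1 ((X 0 : MvP) ^ 2) = 0 := by
    rw [pderiv_pow, pderiv_X_of_ne (show (0:Fin 2) ≠ 1 by decide), mul_zero]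
  rw [RR, map_add, h, pderiv_pow, pderiv_X_self]
  norm_num

lemma pLap_RR : pLap RR = 4 := by
  rw [pLap, pderiv_RR_0, pderiv_RR_1]
  have h0 : (2 : MvP) * X 0 = X 0 + X 0 := by ring
  have h1 : (2 : MvP) * X 1 = X 1 + X 1 := by ring
  rw [h0, h1, map_add, map_add, pderiv_X_self, pderiv_X_self]
  norm_num

lemma pLap_RR_mul (q : MvP) :
    pLap (RR * q) = 4 * q + 4 * (X 0 * pderiv 0 q + X 1 * pderiv 1 q) + RR * pLap q := by
  rw [pLap_mul, pLap_RR, pderiv_RR_0, pderiv_RR_1]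
  ring

lemma pLap_gen (i j : ℕ) :
    pLap (RR^(i+1) * FF j) = ((4*(i+1)*(i+1+j) : ℕ) : MvP) * (RR^i * FF j) ∧
    pLap (RR^(i+1) * GG j) = ((4*(i+1)*(i+1+j) : ℕ) : MvP) * (RR^i * GG j) := by
  induction i with
  | zero =>
    have hF := euler (FF_isHomogeneous j).1
    have hG := euler (FF_isHomogeneous j).2
    constructor
    · rw [pow_one, pow_zero, one_mul, pLap_RR_mul, (pLap_FF j).1, hF]
      push_cast; ring
    · rw [pow_one, pow_zero, one_mul, pLap_RR_mul, (pLap_FF j).2, hG]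
      push_cast; ring
  | succ i ih =>
    have hhF := euler (genF_isHomogeneous (i+1) j)
    have hhG := euler (genG_isHomogeneous (i+1) j)
    constructor
    · have hrw : RR^(i+1+1) * FF j = RR * (RR^(i+1) * FF j) := by ring
      rw [hrw, pLap_RR_mul, ih.1, hhF]
      push_cast; ring
    · have hrw : RR^(i+1+1) * GG j = RR * (RR^(i+1) * GG j) := by ring
      rw [hrw, pLap_RR_mul, ih.2, hhG]
      push_cast; ring

lemma pLap_iter_gen (i j : ℕ) :
    pLap^[i+1] (RR^i * FF j) = 0 ∧ pLap^[i+1] (RR^i * GG j) = 0 := by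
  induction i with
  | zero =>
    constructor <;> rw [pow_zero, one_mul, Function.iterate_one]
    exacts [(pLap_FF j).1, (pLap_FF j).2]
  | succ i ih =>
    constructor <;> rw [Function.iterate_succ_apply]
    · rw [(pLap_gen i j).1, pLap_iter_natCast_mul, ih.1, mul_zero]
    · rw [(pLap_gen i j).2, pLap_iter_natCast_mul, ih.2, mul_zero]

lemma pLap_iter_TM {t n : ℕ} {p : MvP} (hp : p ∈ TM t n) : pLap^[t+1] p = 0 := by
  induction hp using Submodule.span_induction with
  | mem q hq =>
    obtain ⟨i, j, hi, hn, ho⟩ := hq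
    have key : pLap^[i+1] q = 0 := by
      rcases ho with rfl | rfl
      exacts [(pLap_iter_gen i j).1, (pLap_iter_gen i j).2]
    have ht : t+1 = (t-i) + (i+1) := by omega
    rw [ht, Function.iterate_add_apply, key, pLap_iter_zero]
  | zero => exact pLap_iter_zero _
  | add x y hx hy ihx ihy => rw [pLap_iter_add, ihx, ihy, add_zero]
  | smul c x hx ihx => rw [pLap_iter_smul, ihx, smul_zero]

/-! ### Multiplication by variables preserves the filtration -/

lemma half_smul (v : MvP) : (2⁻¹ : ℝ) • (2 * v) = v := by
  rw [two_mul, smul_add, ← add_smul]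
  norm_num

lemma X_mul_TM {t n : ℕ} {p : MvP} (hp : p ∈ TM t n) :
    X 0 * p ∈ TM (t+1) (n+1) ∧ X 1 * p ∈ TM (t+1) (n+1) := by
  induction hp using Submodule.span_induction with
  | zero => constructor <;> · rw [mul_zero]; exact zero_mem _
  | add x y hx hy ihx ihy =>
    constructor
    · rw [mul_add]; exact add_mem ihx.1 ihy.1
    · rw [mul_add]; exact add_mem ihx.2 ihy.2
  | smul c x hx ihx =>
    constructor
    · rw [mul_smul_comm]; exact Submodule.smul_mem _ _ ihx.1
    · rw [mul_smul_comm]; exact Submodule.smul_mem _ _ ihx.2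
  | mem q hq =>
    obtain ⟨i, j, hi, hn, ho⟩ := hq
    rcases ho with rfl | rfl
    · cases j with
      | zero =>
        have h1 : X 0 * (RR^i * FF 0) = RR^i * FF 1 := by
          rw [FF_zero, FF_one]; ring
        have h2 : X 1 * (RR^i * FF 0) = RR^i * GG 1 := by
          rw [FF_zero, GG_one]; ring
        exact ⟨h1 ▸ memF_TM (by omega) (by omega), h2 ▸ memG_TM (by omega) (by omega)⟩
      | succ j =>
        have e := idA j
        have eB := idB j
        constructor
        · have step : RR^i * FF (j+2) + RR^(i+1) * FF j = 2 * (X 0 * (RR^i * FF (j+1))) := by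
            rw [show FF (j+2) = X 0 * FF (j+1) - X 1 * GG (j+1) from rfl]
            linear_combination (-(RR^i)) * e
          have heq : X 0 * (RR^i * FF (j+1))
              = (2⁻¹ : ℝ) • (RR^i * FF (j+2) + RR^(i+1) * FF j) := by
            rw [step, half_smul]
          rw [heq]
          exact Submodule.smul_mem _ _
            (add_mem (memF_TM (by omega) (by omega)) (memF_TM (by omega) (by omega)))
        · have step : RR^i * GG (j+2) - RR^(i+1) * GG j = 2 * (X 1 * (RR^i * FF (j+1))) := by
            rw [show GG (j+2) = X 0 * GG (j+1) + X 1 * FF (j+1) from rfl]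
            linear_combination RR^i * eB
          have heq : X 1 * (RR^i * FF (j+1))
              = (2⁻¹ : ℝ) • (RR^i * GG (j+2) - RR^(i+1) * GG j) := by
            rw [step, half_smul]
          rw [heq]
          exact Submodule.smul_mem _ _
            (sub_mem (memG_TM (by omega) (by omega)) (memG_TM (by omega) (by omega)))
    · cases j with
      | zero =>
        have h1 : X 0 * (RR^i * GG 0) = 0 := by rw [GG_zero]; ring
        have h2 : X 1 * (RR^i * GG 0) = 0 := by rw [GG_zero]; ring
        exact ⟨h1 ▸ zero_mem _, h2 ▸ zero_mem _⟩
      | succ j =>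
        have e := idA j
        have eB := idB j
        constructor
        · have step : RR^i * GG (j+2) + RR^(i+1) * GG j = 2 * (X 0 * (RR^i * GG (j+1))) := by
            rw [show GG (j+2) = X 0 * GG (j+1) + X 1 * FF (j+1) from rfl]
            linear_combination (-(RR^i)) * eB
          have heq : X 0 * (RR^i * GG (j+1))
              = (2⁻¹ : ℝ) • (RR^i * GG (j+2) + RR^(i+1) * GG j) := by
            rw [step, half_smul]
          rw [heq]
          exact Submodule.smul_mem _ _
            (add_mem (memG_TM (by omega) (by omega)) (memG_TM (by omega) (by omega)))
        · have step : RR^(i+1) * FF j - RR^i * FF (j+2) = 2 * (X 1 * (RR^i * GG (j+1))) := by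
            rw [show FF (j+2) = X 0 * FF (j+1) - X 1 * GG (j+1) from rfl]
            linear_combination (-(RR^i)) * e
          have heq : X 1 * (RR^i * GG (j+1))
              = (2⁻¹ : ℝ) • (RR^(i+1) * FF j - RR^i * FF (j+2)) := by
            rw [step, half_smul]
          rw [heq]
          exact Submodule.smul_mem _ _
            (sub_mem (memF_TM (by omega) (by omega)) (memF_TM (by omega) (by omega)))

/-! ### Spanning -/

lemma X_pow_mul_mem (k a b : ℕ) :
    (X 0:MvP)^a * X 1^b * FF k ∈ TM (a+b) (a+b+k) ∧
    (X 0:MvP)^a * X 1^b * GG k ∈ TM (a+b) (a+b+k) := by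
  induction a with
  | zero =>
    induction b with
    | zero =>
      constructor
      · have h : (X 0:MvP)^0 * X 1^0 * FF k = RR^0 * FF k := by ring
        exact h ▸ memF_TM le_rfl (by omega)
      · have h : (X 0:MvP)^0 * X 1^0 * GG k = RR^0 * GG k := by ring
        exact h ▸ memG_TM le_rfl (by omega)
    | succ b ihb =>
      have e1 : (X 0:MvP)^0 * X 1^(b+1) * FF k = X 1 * ((X 0:MvP)^0 * X 1^b * FF k) := by ring
      have e2 : (X 0:MvP)^0 * X 1^(b+1) * GG k = X 1 * ((X 0:MvP)^0 * X 1^b * GG k) := by ring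
      have h1 := (X_mul_TM ihb.1).2
      have h2 := (X_mul_TM ihb.2).2
      have hT : TM (0+b+1) (0+b+k+1) = TM (0+(b+1)) (0+(b+1)+k) := by congr 1 <;> omega
      rw [hT] at h1 h2
      exact ⟨e1 ▸ h1, e2 ▸ h2⟩
  | succ a iha =>
    have e1 : (X 0:MvP)^(a+1) * X 1^b * FF k = X 0 * ((X 0:MvP)^a * X 1^b * FF k) := by ring
    have e2 : (X 0:MvP)^(a+1) * X 1^b * GG k = X 0 * ((X 0:MvP)^a * X 1^b * GG k) := by ring
    have h1 := (X_mul_TM iha.1).1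
    have h2 := (X_mul_TM iha.2).1
    have hT : TM (a+b+1) (a+b+k+1) = TM ((a+1)+b) ((a+1)+b+k) := by congr 1 <;> omega
    rw [hT] at h1 h2
    exact ⟨e1 ▸ h1, e2 ▸ h2⟩

lemma monomial_as_smul (d : Fin 2 →₀ ℕ) (c : ℝ) :
    (monomial d c : MvP) = c • ((X 0:MvP)^(d 0) * X 1^(d 1)) := by
  rw [smul_eq_C_mul, monomial_eq, Finsupp.prod_fintype _ _ (fun i => pow_zero _),
    Fin.prod_univ_two]

lemma mul_FF_mem {s k : ℕ} {q : MvP} (hq : q.IsHomogeneous s) :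
    q * FF k ∈ TM s (s+k) ∧ q * GG k ∈ TM s (s+k) := by
  constructor
  all_goals
  · rw [q.as_sum, Finset.sum_mul]
    apply Submodule.sum_mem
    intro d hd
    have hdeg : d 0 + d 1 = s := degree_eq_of_homog hq hd
    rw [monomial_as_smul, smul_mul_assoc]
    apply Submodule.smul_mem
    first
    | exact hdeg ▸ (X_pow_mul_mem k (d 0) (d 1)).1
    | exact hdeg ▸ (X_pow_mul_mem k (d 0) (d 1)).2

lemma smul_isHomogeneous {p : MvP} {n : ℕ} (c : ℝ) (hp : p.IsHomogeneous n) :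
    (c • p).IsHomogeneous n := by
  rw [smul_eq_C_mul]; exact hp.C_mul c

lemma homog_mem_TM {n : ℕ} {p : MvP} (hp : p.IsHomogeneous n) : p ∈ TM n n := by
  rw [p.as_sum]
  apply Submodule.sum_mem
  intro d hd
  have hdeg : d 0 + d 1 = n := degree_eq_of_homog hp hd
  rw [monomial_as_smul]
  apply Submodule.smul_mem
  have h := (X_pow_mul_mem 0 (d 0) (d 1)).1
  rw [FF_zero, mul_one, hdeg] at h
  exact (by omega : n + 0 = n) ▸ h

/-! ### Harmonic homogeneous polynomials -/

lemma harm {m : ℕ} {p : MvP} (hp : p.IsHomogeneous m) (h0 : pLap p = 0) :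
    ∃ a b : ℝ, p = a • FF m + b • GG m := by
  induction m generalizing p with
  | zero =>
    refine ⟨coeff 0 p, 0, ?_⟩
    rw [eq_C_of_isHomogeneous_zero hp, FF_zero, GG_zero, smul_eq_C_mul, mul_one]
    simp
  | succ m ih =>
    have hd : (pderiv 0 p).IsHomogeneous m := by
      simpa using pderiv_isHomogeneous 0 hp
    have hl : pLap (pderiv 0 p) = 0 := by rw [pLap_pderiv, h0, map_zero]
    obtain ⟨a, b, hab⟩ := ih hd hl
    have hne : ((m:ℝ)+1) ≠ 0 := by positivity
    have hc : ∀ (c : ℝ) (v : MvP), (c / ((m:ℝ)+1)) • (((m+1:ℕ) : MvP) * v) = c • v := by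
      intro c v
      rw [← map_natCast (C : ℝ →+* MvP) (m+1), smul_eq_C_mul, smul_eq_C_mul,
        ← mul_assoc, ← map_mul]
      congr 2
      push_cast
      field_simp
    set q : MvP := (a/((m:ℝ)+1)) • FF (m+1) + (b/((m:ℝ)+1)) • GG (m+1) with hqdef
    have hdq : pderiv 0 q = a • FF m + b • GG m := by
      rw [hqdef, map_add, smul_eq_C_mul, smul_eq_C_mul, pderiv_C_mul, pderiv_C_mul,
        (pderiv_FG m).1, (pderiv_FG m).2.2.1, ← smul_eq_C_mul, ← smul_eq_C_mul,
        hc a, hc b]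
    have hq_harm : pLap q = 0 := by
      rw [hqdef, pLap_add, pLap_smul, pLap_smul, (pLap_FF (m+1)).1, (pLap_FF (m+1)).2]
      simp
    have hqh : q.IsHomogeneous (m+1) :=
      (smul_isHomogeneous _ (FF_isHomogeneous (m+1)).1).add
        (smul_isHomogeneous _ (FF_isHomogeneous (m+1)).2)
    have hsub0 : pderiv 0 (p - q) = 0 := by rw [map_sub, hdq, hab, sub_self]
    obtain ⟨c, hc'⟩ := zder (hp.sub hqh) hsub0
    have hlap : pLap (p - q) = 0 := by rw [pLap_sub, h0, hq_harm, sub_zero]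
    cases m with
    | zero =>
      refine ⟨a/(((0:ℕ):ℝ)+1), b/(((0:ℕ):ℝ)+1) + c, ?_⟩
      have hpq : p = q + c • (X 1:MvP)^1 := by rw [← hc']; ring
      rw [hpq, hqdef, pow_one, ← GG_one]
      module
    | succ m' =>
      have hX1 : pLap ((X 1:MvP) ^ (m'+2)) = ((m'+2:ℕ):MvP) * (((m'+1:ℕ):MvP) * X 1^m') := by
        have hz : pderiv 0 ((X 1:MvP)^(m'+2)) = 0 := by
          rw [pderiv_pow, pderiv_X_of_ne (show (1:Fin 2) ≠ 0 by decide), mul_zero]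
        have h1 : pderiv 1 ((X 1:MvP)^(m'+2)) = ((m'+2:ℕ):MvP) * X 1^(m'+1) := by
          rw [pderiv_pow, pderiv_X_self, mul_one, Nat.succ_sub_one]
        have h2 : pderiv 1 (((m'+2:ℕ):MvP) * X 1^(m'+1))
            = ((m'+2:ℕ):MvP) * (((m'+1:ℕ):MvP) * X 1^m') := by
          rw [pderiv_natCast_mul, pderiv_pow, pderiv_X_self, mul_one, Nat.succ_sub_one]
        rw [pLap, hz, map_zero, h1, h2, zero_add]
      have hzero : c • pLap ((X 1:MvP)^(m'+2)) = 0 := by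
        rw [← pLap_smul, ← hc', hlap]
      rw [hX1] at hzero
      have hprodne : (((m'+2:ℕ):MvP) * (((m'+1:ℕ):MvP) * (X 1:MvP)^m')) ≠ 0 := by
        have c1 : ((m'+2:ℕ):MvP) ≠ 0 := by
          rw [← map_natCast (C : ℝ →+* MvP) (m'+2), Ne, C_eq_zero]
          positivity
        have c2 : ((m'+1:ℕ):MvP) ≠ 0 := by
          rw [← map_natCast (C : ℝ →+* MvP) (m'+1), Ne, C_eq_zero]
          positivity
        exact mul_ne_zero c1 (mul_ne_zero c2 (pow_ne_zero _ (X_ne_zero _)))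
      have hc0 : c = 0 := by
        by_contra hcne
        apply hprodne
        have hcongr := congrArg (fun w => c⁻¹ • w) hzero
        simpa [smul_smul, inv_mul_cancel₀ hcne] using hcongr
      rw [hc0, zero_smul, sub_eq_zero] at hc'
      exact ⟨a / ((((m'+1 : ℕ)) : ℝ) + 1), b / ((((m'+1 : ℕ)) : ℝ) + 1), hc'.trans hqdef⟩

/-! ### Surjectivity of the Laplacian on the filtration -/

lemma surj {t m : ℕ} {q : MvP} (hq : q ∈ TM t m) :
    ∃ p' : MvP, p' ∈ TM (t+1) (m+2) ∧ pLap p' = q := by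
  induction hq using Submodule.span_induction with
  | mem x hx =>
    obtain ⟨i, j, hi, hn, ho⟩ := hx
    have hNne : (((4*(i+1)*(i+1+j) : ℕ)):ℝ) ≠ 0 := by positivity
    rcases ho with rfl | rfl
    · refine ⟨(((4*(i+1)*(i+1+j) : ℕ)):ℝ)⁻¹ • (RR^(i+1) * FF j),
        Submodule.smul_mem _ _ (memF_TM (by omega) (by omega)), ?_⟩
      rw [pLap_smul, (pLap_gen i j).1, ← map_natCast (C : ℝ →+* MvP), smul_eq_C_mul,
        ← mul_assoc, ← map_mul, inv_mul_cancel₀ hNne, map_one, one_mul]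
    · refine ⟨(((4*(i+1)*(i+1+j) : ℕ)):ℝ)⁻¹ • (RR^(i+1) * GG j),
        Submodule.smul_mem _ _ (memG_TM (by omega) (by omega)), ?_⟩
      rw [pLap_smul, (pLap_gen i j).2, ← map_natCast (C : ℝ →+* MvP), smul_eq_C_mul,
        ← mul_assoc, ← map_mul, inv_mul_cancel₀ hNne, map_one, one_mul]
  | zero => exact ⟨0, zero_mem _, pLap_zero⟩
  | add x y hx hy ihx ihy =>
    obtain ⟨px, hpx, hlx⟩ := ihx
    obtain ⟨py, hpy, hly⟩ := ihy
    exact ⟨px + py, add_mem hpx hpy, by rw [pLap_add, hlx, hly]⟩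
  | smul c x hx ihx =>
    obtain ⟨px, hpx, hlx⟩ := ihx
    exact ⟨c • px, Submodule.smul_mem _ _ hpx, by rw [pLap_smul, hlx]⟩

/-! ### Main reverse inclusion -/

lemma main_rev : ∀ s k : ℕ, s + 2 ≤ k → ∀ p : MvP,
    p.IsHomogeneous (s+k) → pLap^[s+1] p = 0 → p ∈ TM s (s+k) := by
  intro s
  induction s with
  | zero =>
    intro k hk p hp h0
    rw [zero_add] at hp
    have h0' : pLap p = 0 := by simpa using h0
    obtain ⟨a, b, hab⟩ := harm hp h0'
    have hFk : (FF k : MvP) = RR^0 * FF k := by rw [pow_zero, one_mul]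
    have hGk : (GG k : MvP) = RR^0 * GG k := by rw [pow_zero, one_mul]
    rw [hab, hFk, hGk]
    exact add_mem (Submodule.smul_mem _ _ (memF_TM le_rfl (by omega)))
      (Submodule.smul_mem _ _ (memG_TM le_rfl (by omega)))
  | succ s ih =>
    intro k hk p hp h0
    have hq_hom : (pLap p).IsHomogeneous (s + (k-1)) := by
      have h := pLap_isHomogeneous hp
      rw [show s+1+k-2 = s + (k-1) by omega] at h
      exact h
    have hq0 : pLap^[s+1] (pLap p) = 0 := by
      rw [← Function.iterate_succ_apply]
      exact h0
    have hqmem := ih (k-1) (by omega) _ hq_hom hq0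
    obtain ⟨p', hp'mem, hp'lap⟩ := surj hqmem
    rw [show s + (k-1) + 2 = s+1+k by omega] at hp'mem
    have hh : pLap (p - p') = 0 := by rw [pLap_sub, hp'lap, sub_self]
    obtain ⟨a, b, hab⟩ := harm (hp.sub (TM_isHomogeneous hp'mem)) hh
    have hpized : p = (p - p') + p' := by ring
    have hFk : (FF (s+1+k) : MvP) = RR^0 * FF (s+1+k) := by rw [pow_zero, one_mul]
    have hGk : (GG (s+1+k) : MvP) = RR^0 * GG (s+1+k) := by rw [pow_zero, one_mul]
    rw [hpized, hab, hFk, hGk]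
    exact add_mem (add_mem (Submodule.smul_mem _ _ (memF_TM (by omega) (by omega)))
      (Submodule.smul_mem _ _ (memG_TM (by omega) (by omega)))) hp'mem

end PsHkAux

theorem PsHk_description
    (f g : ℕ → MvPolynomial (Fin 2) ℝ)
    (hf : ∀ (n : ℕ) (x y : ℝ), eval ![x, y] (f n) = (((x : ℂ) + y * Complex.I) ^ n).re)
    (hg : ∀ (n : ℕ) (x y : ℝ), eval ![x, y] (g n) = (((x : ℂ) + y * Complex.I) ^ n).im)
    (k s : ℕ) (hk : 1 ≤ k) :
    (s < k - 1 →
      ∀ p : MvPolynomial (Fin 2) ℝ,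
        (∃ p₁ p₂ : MvPolynomial (Fin 2) ℝ, p₁.IsHomogeneous s ∧ p₂.IsHomogeneous s ∧
            p = p₁ * f k + p₂ * g k)
          ↔ (p.IsHomogeneous (s + k) ∧ pLap^[s + 1] p = 0)) ∧
    (k - 1 ≤ s →
      ∀ p : MvPolynomial (Fin 2) ℝ,
        (∃ p₁ p₂ : MvPolynomial (Fin 2) ℝ, p₁.IsHomogeneous s ∧ p₂.IsHomogeneous s ∧
            p = p₁ * f k + p₂ * g k)
          ↔ p.IsHomogeneous (s + k)) := by
  have hfF : ∀ n, f n = PsHkAux.FF n := by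
    intro n
    apply MvPolynomial.funext
    intro v
    have hv : v = ![v 0, v 1] := by funext i; fin_cases i <;> rfl
    rw [hv, hf n (v 0) (v 1), (PsHkAux.eval_FG n (v 0) (v 1)).1]
  have hgG : ∀ n, g n = PsHkAux.GG n := by
    intro n
    apply MvPolynomial.funext
    intro v
    have hv : v = ![v 0, v 1] := by funext i; fin_cases i <;> rfl
    rw [hv, hg n (v 0) (v 1), (PsHkAux.eval_FG n (v 0) (v 1)).2]
  refine ⟨?_, ?_⟩
  · intro hlt p
    have hk2 : s + 2 ≤ k := by omega
    constructor
    · rintro ⟨p₁, p₂, h1, h2, rfl⟩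
      rw [hfF k, hgG k]
      refine ⟨(h1.mul (PsHkAux.FF_isHomogeneous k).1).add
        (h2.mul (PsHkAux.FF_isHomogeneous k).2), ?_⟩
      exact PsHkAux.pLap_iter_TM
        (add_mem (PsHkAux.mul_FF_mem h1).1 (PsHkAux.mul_FF_mem h2).2)
    · rintro ⟨hph, hp0⟩
      have hmem := PsHkAux.main_rev s k hk2 p hph hp0
      obtain ⟨p₁, p₂, h1, h2, heq⟩ := PsHkAux.mem_SM_iff.mp (PsHkAux.TM_le_SM rfl hmem)
      exact ⟨p₁, p₂, h1, h2, by rw [hfF k, hgG k]; exact heq⟩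
  · intro hge p
    constructor
    · rintro ⟨p₁, p₂, h1, h2, rfl⟩
      rw [hfF k, hgG k]
      exact (h1.mul (PsHkAux.FF_isHomogeneous k).1).add
        (h2.mul (PsHkAux.FF_isHomogeneous k).2)
    · intro hph
      have hmem : p ∈ PsHkAux.TM (s+k) (s+k) := PsHkAux.homog_mem_TM hph
      have hmem2 : p ∈ PsHkAux.TM s (s+k) := by
        have hle : PsHkAux.TM (s+k) (s+k) ≤ PsHkAux.TM s (s+k) := by
          apply Submodule.span_le.mpr
          rintro q ⟨i, j, hi, hn, ho⟩
          exact Submodule.subset_span ⟨i, j, by omega, hn, ho⟩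
        exact hle hmem
      obtain ⟨p₁, p₂, h1, h2, heq⟩ := PsHkAux.mem_SM_iff.mp (PsHkAux.TM_le_SM rfl hmem2)
      exact ⟨p₁, p₂, h1, h2, by rw [hfF k, hgG k]; exact heq⟩
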